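/- (Lemma 3.2) For every i = 1, …, l and every character ν : Q → ℂ^×, the map σ_{ω_i,ν} maps I_{λ_i} into I_{λ_0}: σ_{ω_i,ν}(I_{λ_i}) ⊆ I_{λ_0}. -/

import Mathlib

/-- The data of a finite-dimensional complex simple Lie algebra `𝔤` of type `A`, `D` or `E`
of rank `l`, recorded through: its Cartan matrix `M`; its set `Δ` of positive roots, each
written via its coordinates in the basis of simple roots (so the `i`-th simple root is
`Pi.single i 1`); and the affinization `𝔫̄ = 𝔫 ⊗ ℂ[t,t⁻¹]` of the nilpotent subalgebra
`𝔫 = ⊕_{α ∈ Δ} ℂx_α`, where `x α m` stands for `x_α ⊗ t^m`.  The weight lattice `P` is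
identified with `ℤ^l` via `λ ↦ (⟨λ, α_j⟩)_j`, so that `⟨λ, α⟩ = ∑_j ⟨λ, α_j⟩ α^j` for a
positive root `α` with simple-root coordinates `α^j`; in particular `⟨λ_i, α⟩ = α^i` and
`⟨α_i, α⟩ = ∑_j m_{ij} α^j`. -/
structure ADEContext where
  /-- the rank -/
  l : ℕ
  hl : 0 < l
  /-- the Cartan matrix -/
  M : Matrix (Fin l) (Fin l) ℤ
  M_symm : M.IsSymm
  M_diag : ∀ i, M i i = 2
  M_offdiag : ∀ i j, i ≠ j → M i j = 0 ∨ M i j = -1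
  M_posdef : (M.map ((↑) : ℤ → ℝ)).PosDef
  /-- the set of positive roots, in simple-root coordinates -/
  Δ : Finset (Fin l → ℤ)
  Δ_nonneg : ∀ α ∈ Δ, ∀ j, 0 ≤ α j
  Δ_ne_zero : ∀ α ∈ Δ, α ≠ 0
  simple_mem : ∀ i : Fin l, (Pi.single i 1 : Fin l → ℤ) ∈ Δ
  /-- every nonsimple positive root is a positive root plus a simple root -/
  Δ_decomp : ∀ α ∈ Δ, (∀ i : Fin l, α ≠ Pi.single i 1) →
    ∃ β ∈ Δ, ∃ i : Fin l, α = β + Pi.single i 1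
  /-- `α_i + α_j` is a root iff `i ≠ j` and `m_{ij} = -1` (simply-laced types) -/
  sum_simple_mem_iff : ∀ i j : Fin l,
    ((Pi.single i 1 + Pi.single j 1 : Fin l → ℤ) ∈ Δ) ↔ (i ≠ j ∧ M i j = -1)
  /-- `2α_i + α_j` is never a root (simply-laced types) -/
  two_simple_add_not_mem : ∀ i j : Fin l,
    ((2 : ℤ) • (Pi.single i 1 : Fin l → ℤ) + Pi.single j 1) ∉ Δ
  /-- the underlying type of the affinization `𝔫̄ = 𝔫 ⊗ ℂ[t,t⁻¹]` -/
  nbar : Type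
  [instLieRing : LieRing nbar]
  [instLieAlgebra : LieAlgebra ℂ nbar]
  /-- `x α m` is the element `x_α ⊗ t^m` of `𝔫̄` -/
  x : (Fin l → ℤ) → ℤ → nbar
  /-- the elements `x_α ⊗ t^m`, `α ∈ Δ`, `m ∈ ℤ`, form a `ℂ`-basis of `𝔫̄` -/
  basis : Module.Basis ({α // α ∈ Δ} × ℤ) ℂ nbar
  basis_eq : ∀ (α : {α // α ∈ Δ}) (m : ℤ), basis (α, m) = x α.1 m
  /-- the structure constants: `[x_α, x_β] = C_{α,β} x_{α+β}` -/
  C : (Fin l → ℤ) → (Fin l → ℤ) → ℂ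
  C_ne_zero : ∀ α ∈ Δ, ∀ β ∈ Δ, α + β ∈ Δ → C α β ≠ 0
  /-- the bracket `[x ⊗ t^m, y ⊗ t^n] = [x,y] ⊗ t^{m+n}` on `𝔫̄` -/
  bracket_x : ∀ α ∈ Δ, ∀ β ∈ Δ, ∀ m n : ℤ,
    ⁅x α m, x β n⁆ = if α + β ∈ Δ then C α β • x (α + β) (m + n) else 0

attribute [instance] ADEContext.instLieRing ADEContext.instLieAlgebra

namespace ADEContext

variable (ctx : ADEContext)

/-- the universal enveloping algebra `U(𝔫̄)` -/
abbrev U : Type := UniversalEnvelopingAlgebra ℂ ctx.nbar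

/-- the element `x_α(m) = x_α ⊗ t^m`, viewed in `U(𝔫̄)` -/
noncomputable def X (α : Fin ctx.l → ℤ) (m : ℤ) : ctx.U :=
  UniversalEnvelopingAlgebra.ι ℂ (ctx.x α m)

/-- the `i`-th simple root `α_i`, in simple-root coordinates -/
def sroot (i : Fin ctx.l) : Fin ctx.l → ℤ := Pi.single i 1

/-- the left ideal `U(𝔫̄)𝔫̄₊` of `U(𝔫̄)` generated by `𝔫̄₊ = 𝔫 ⊗ ℂ[t]` (equivalently, by the
elements `x_α(m)`, `α ∈ Δ`, `m ≥ 0`, which span `𝔫̄₊`) -/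
noncomputable def Uplus : Submodule ctx.U ctx.U :=
  Submodule.span ctx.U {u | ∃ α ∈ ctx.Δ, ∃ m : ℤ, 0 ≤ m ∧ u = ctx.X α m}

/-- the truncated relation `R^j_{-1,t} = ∑_{m₁,m₂ ≤ -1, m₁+m₂=-t} x_{α_j}(m₁)x_{α_j}(m₂)` -/
noncomputable def R (j : Fin ctx.l) (t : ℤ) : ctx.U :=
  ∑ m ∈ Finset.Icc (1 - t) (-1 : ℤ), ctx.X (ctx.sroot j) m * ctx.X (ctx.sroot j) (-t - m)

/-- the left ideal `J` of `U(𝔫̄)` generated by the `R^j_{-1,t}`, `j = 1, …, l`, `t ≥ 2` -/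
noncomputable def Jideal : Submodule ctx.U ctx.U :=
  Submodule.span ctx.U {u | ∃ j : Fin ctx.l, ∃ t : ℤ, 2 ≤ t ∧ u = ctx.R j t}

/-- the left ideal `I_{λ_0} = J + U(𝔫̄)𝔫̄₊` -/
noncomputable def I0 : Submodule ctx.U ctx.U := ctx.Jideal ⊔ ctx.Uplus

/-- the left ideal `I_{λ_i} = I_{λ_0} + U(𝔫̄)x_{α_i}(-1)`, `i = 1, …, l` -/
noncomputable def Ii (i : Fin ctx.l) : Submodule ctx.U ctx.U :=
  ctx.I0 ⊔ Submodule.span ctx.U {ctx.X (ctx.sroot i) (-1)}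

/-- the value `ν(α) = ∏_j ν_j^{α^j}` on `α ∈ Q` of the character `ν : Q → ℂ^×` determined by
`ν(α_j) = ν_j = νu j` -/
def charVal (νu : Fin ctx.l → ℂˣ) (α : Fin ctx.l → ℤ) : ℂ :=
  (∏ j, (νu j) ^ (α j) : ℂˣ)

end ADEContext

section Aux

open Finset

/-- reflection of a sum over an integer interval -/
lemma sum_Icc_reflect {A : Type*} [AddCommMonoid A] (f : ℤ → A) (l u : ℤ) :
    ∑ a ∈ Finset.Icc l u, f a = ∑ a ∈ Finset.Icc l u, f (l + u - a) := by
  refine Finset.sum_nbij' (fun a => l + u - a) (fun a => l + u - a) ?_ ?_ ?_ ?_ ?_ <;>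
    intro a ha <;> simp only [Finset.mem_Icc] at * <;> first | omega | (congr 1; omega)

/-- shift of a sum over an integer interval -/
lemma sum_Icc_shift {A : Type*} [AddCommMonoid A] (f : ℤ → A) (l u c : ℤ) :
    ∑ a ∈ Finset.Icc (l + c) (u + c), f a = ∑ a ∈ Finset.Icc l u, f (a + c) := by
  rw [← Finset.map_add_right_Icc, Finset.sum_map]
  rfl

namespace ADEContext

variable {ctx : ADEContext}

lemma X_bracket (α β : Fin ctx.l → ℤ) (hα : α ∈ ctx.Δ) (hβ : β ∈ ctx.Δ) (m n : ℤ) :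
    ctx.X α m * ctx.X β n = ctx.X β n * ctx.X α m +
      (if α + β ∈ ctx.Δ then ctx.C α β • ctx.X (α + β) (m + n) else 0) := by
  letI : LieRing ctx.U := LieRing.ofAssociativeRing
  letI : LieAlgebra ℂ ctx.U := LieAlgebra.ofAssociativeAlgebra
  have h := (UniversalEnvelopingAlgebra.ι ℂ (L := ctx.nbar)).map_lie (ctx.x α m) (ctx.x β n)
  rw [ctx.bracket_x α hα β hβ m n, Ring.lie_def] at h
  simp only [X]
  by_cases hmem : α + β ∈ ctx.Δ
  · rw [if_pos hmem, map_smul] at h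
    rw [if_pos hmem, add_comm]
    exact eq_add_of_sub_eq h.symm
  · rw [if_neg hmem, map_zero] at h
    rw [if_neg hmem, add_zero]
    have h2 := h.symm
    rwa [sub_eq_zero] at h2

lemma X_comm {α β : Fin ctx.l → ℤ} (hα : α ∈ ctx.Δ) (hβ : β ∈ ctx.Δ)
    (hmem : α + β ∉ ctx.Δ) (m n : ℤ) :
    ctx.X α m * ctx.X β n = ctx.X β n * ctx.X α m := by
  rw [X_bracket α β hα hβ m n, if_neg hmem, add_zero]

lemma X_mul {α β : Fin ctx.l → ℤ} (hα : α ∈ ctx.Δ) (hβ : β ∈ ctx.Δ)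
    (hmem : α + β ∈ ctx.Δ) (m n : ℤ) :
    ctx.X α m * ctx.X β n = ctx.X β n * ctx.X α m + ctx.C α β • ctx.X (α + β) (m + n) := by
  rw [X_bracket α β hα hβ m n, if_pos hmem]

/-- `I₀` is closed under left multiplication -/
lemma mul_mem_of_mem {p : Submodule ctx.U ctx.U} (a : ctx.U) {u : ctx.U} (hu : u ∈ p) :
    a * u ∈ p := by
  simpa [smul_eq_mul] using p.smul_mem a hu

lemma csmul_mem {p : Submodule ctx.U ctx.U} (c : ℂ) {u : ctx.U} (hu : u ∈ p) :
    c • u ∈ p := by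
  rw [Algebra.smul_def]
  exact mul_mem_of_mem _ hu

lemma X_mem_Uplus {α : Fin ctx.l → ℤ} (hα : α ∈ ctx.Δ) {m : ℤ} (hm : 0 ≤ m) :
    ctx.X α m ∈ ctx.Uplus :=
  Submodule.subset_span ⟨α, hα, m, hm, rfl⟩

lemma mul_X_mem_Uplus (a : ctx.U) {α : Fin ctx.l → ℤ} (hα : α ∈ ctx.Δ) {m : ℤ} (hm : 0 ≤ m) :
    a * ctx.X α m ∈ ctx.Uplus :=
  mul_mem_of_mem a (X_mem_Uplus hα hm)

lemma R_mem_J {j : Fin ctx.l} {t : ℤ} (ht : 2 ≤ t) : ctx.R j t ∈ ctx.Jideal :=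
  Submodule.subset_span ⟨j, t, ht, rfl⟩

lemma mul_R_mem_J (a : ctx.U) {j : Fin ctx.l} {t : ℤ} (ht : 2 ≤ t) :
    a * ctx.R j t ∈ ctx.Jideal :=
  mul_mem_of_mem a (R_mem_J ht)

lemma J_le_I0 : ctx.Jideal ≤ ctx.I0 := le_sup_left

lemma Uplus_le_I0 : ctx.Uplus ≤ ctx.I0 := le_sup_right

lemma mul_X_mem_I0 (a : ctx.U) {α : Fin ctx.l → ℤ} (hα : α ∈ ctx.Δ) {m : ℤ} (hm : 0 ≤ m) :
    a * ctx.X α m ∈ ctx.I0 :=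
  Uplus_le_I0 (mul_X_mem_Uplus a hα hm)

lemma mul_R_mem_I0 (a : ctx.U) {j : Fin ctx.l} {t : ℤ} (ht : 2 ≤ t) :
    a * ctx.R j t ∈ ctx.I0 :=
  J_le_I0 (mul_R_mem_J a ht)

/-- `R j 1 = 0` -/
lemma R_one (j : Fin ctx.l) : ctx.R j 1 = 0 := by
  unfold R
  rw [show (1 : ℤ) - 1 = 0 by norm_num, Finset.Icc_eq_empty (by norm_num), Finset.sum_empty]

/-- `R i 2 = x_i(-1)x_i(-1)` -/
lemma R_two (j : Fin ctx.l) :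
    ctx.R j 2 = ctx.X (ctx.sroot j) (-1) * ctx.X (ctx.sroot j) (-1) := by
  unfold R
  rw [show (1 : ℤ) - 2 = -1 by norm_num, Finset.Icc_self, Finset.sum_singleton]
  norm_num

/-- simple root vectors with the same index commute -/
lemma X_simple_self_comm (j : Fin ctx.l) (m n : ℤ) :
    ctx.X (ctx.sroot j) m * ctx.X (ctx.sroot j) n
      = ctx.X (ctx.sroot j) n * ctx.X (ctx.sroot j) m := by
  refine X_comm (ctx.simple_mem j) (ctx.simple_mem j) ?_ m n
  rw [ctx.sum_simple_mem_iff j j]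
  simp

end ADEContext

end Aux

section Key
namespace ADEContext

variable {ctx : ADEContext}

/-- the pairing `⟨ω_i, α⟩` -/
def Dw (ctx : ADEContext) (i : Fin ctx.l) (α : Fin ctx.l → ℤ) : ℤ :=
  (∑ j, ctx.M i j * α j) - α i

lemma Dw_add (i : Fin ctx.l) (α β : Fin ctx.l → ℤ) :
    Dw ctx i (α + β) = Dw ctx i α + Dw ctx i β := by
  unfold Dw
  simp only [Pi.add_apply, mul_add, Finset.sum_add_distrib]
  ring

lemma Dw_single (i j : Fin ctx.l) :
    Dw ctx i (Pi.single j 1) = ctx.M i j - (if j = i then 1 else 0) := by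
  unfold Dw
  congr 1
  · simp [Pi.single_apply, mul_ite, Finset.sum_ite_eq']
  · simp [Pi.single_apply, eq_comm]

lemma sroot_mem (j : Fin ctx.l) : ctx.sroot j ∈ ctx.Δ := ctx.simple_mem j

lemma height_pos {α : Fin ctx.l → ℤ} (hα : α ∈ ctx.Δ) : 0 < ∑ j, α j := by
  have h0 : ∀ j ∈ Finset.univ, (0:ℤ) ≤ α j := fun j _ => ctx.Δ_nonneg α hα j
  obtain ⟨j, hj⟩ := Function.ne_iff.mp (ctx.Δ_ne_zero α hα)
  exact Finset.sum_pos' h0 ⟨j, Finset.mem_univ j,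
    lt_of_le_of_ne (ctx.Δ_nonneg α hα j) (Ne.symm hj)⟩

lemma single_sum : ∀ k : Fin ctx.l, ∑ j, (Pi.single k 1 : Fin ctx.l → ℤ) j = 1 := by
  intro k
  simp [Pi.single_apply]

/-- Key lemma: `x_α(n) x_{α_i}(-1) ∈ I_{λ_0}` whenever `n ≥ -⟨ω_i, α⟩`. -/
lemma key (ctx : ADEContext) (i : Fin ctx.l) :
    ∀ (h : ℕ) (α : Fin ctx.l → ℤ), α ∈ ctx.Δ → (∑ j, α j).toNat = h → ∀ n : ℤ,
      0 ≤ n + Dw ctx i α →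
      ctx.X α n * ctx.X (ctx.sroot i) (-1) ∈ ctx.I0 := by
  intro h
  induction h using Nat.strong_induction_on with
  | _ h IH =>
  intro α hα hht n hn
  by_cases hs : ∀ k : Fin ctx.l, α ≠ Pi.single k 1
  · -- inductive step: α = β + α_k
    obtain ⟨β, hβ, k, hdec⟩ := ctx.Δ_decomp α hα hs
    set dk : ℤ := ctx.M i k - (if k = i then 1 else 0) with hdk
    have hDs : Dw ctx i (Pi.single k 1) = dk := Dw_single i k
    have hDa : Dw ctx i α = Dw ctx i β + dk := by
      rw [hdec, Dw_add, hDs]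
    have hsum : β + Pi.single k 1 ∈ ctx.Δ := hdec ▸ hα
    have hC : ctx.C β (Pi.single k 1) ≠ 0 :=
      ctx.C_ne_zero β hβ _ (ctx.simple_mem k) hsum
    have hh1 : ∑ j, α j = (∑ j, β j) + 1 := by
      rw [hdec]
      simp only [Pi.add_apply]
      rw [Finset.sum_add_distrib, single_sum k]
    have hposβ := height_pos hβ
    have hhβ : (∑ j, β j).toNat < h := by omega
    have hhk : (∑ j, (Pi.single k 1 : Fin ctx.l → ℤ) j).toNat < h := by
      rw [single_sum k]; omega
    have hbr := X_mul (ctx := ctx) hβ (ctx.simple_mem k) hsum (n + dk) (-dk)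
    rw [show n + dk + -dk = n by ring, ← hdec] at hbr
    have m1 : ctx.X (Pi.single k 1) (-dk) * ctx.X (ctx.sroot i) (-1) ∈ ctx.I0 := by
      apply IH _ hhk _ (ctx.simple_mem k) rfl
      rw [hDs]; omega
    have m2 : ctx.X β (n + dk) * ctx.X (ctx.sroot i) (-1) ∈ ctx.I0 := by
      apply IH _ hhβ _ hβ rfl
      rw [hDa] at hn; omega
    have hmem : ctx.C β (Pi.single k 1) • (ctx.X α n * ctx.X (ctx.sroot i) (-1)) ∈ ctx.I0 := by
      have heq : ctx.C β (Pi.single k 1) • (ctx.X α n * ctx.X (ctx.sroot i) (-1))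
          = ctx.X β (n + dk) * (ctx.X (Pi.single k 1) (-dk) * ctx.X (ctx.sroot i) (-1))
            - ctx.X (Pi.single k 1) (-dk) * (ctx.X β (n + dk) * ctx.X (ctx.sroot i) (-1)) := by
        rw [← mul_assoc, ← mul_assoc, ← sub_mul, ← smul_mul_assoc]
        congr 1
        rw [eq_comm, sub_eq_iff_eq_add]
        exact hbr.trans (add_comm _ _)
      rw [heq]
      exact Submodule.sub_mem _ (mul_mem_of_mem _ m1) (mul_mem_of_mem _ m2)
    have h2 := csmul_mem (ctx.C β (Pi.single k 1))⁻¹ hmem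
    rwa [smul_smul, inv_mul_cancel₀ hC, one_smul] at h2
  · -- base case: α simple
    push_neg at hs
    obtain ⟨j, hj⟩ := hs
    subst hj
    rw [Dw_single i j] at hn
    show ctx.X (ctx.sroot j) n * ctx.X (ctx.sroot i) (-1) ∈ ctx.I0
    by_cases hji : j = i
    · subst hji
      rw [if_pos rfl, ctx.M_diag j] at hn
      rcases lt_or_ge n 0 with hneg | hpos
      · have hn1 : n = -1 := by omega
        subst hn1
        rw [← R_two j]
        exact J_le_I0 (R_mem_J (le_refl 2))
      · rw [X_simple_self_comm j n (-1)]
        exact mul_X_mem_I0 _ (sroot_mem j) hpos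
    · rw [if_neg hji] at hn
      have hMsymm : ctx.M j i = ctx.M i j := ctx.M_symm.apply i j
      rcases ctx.M_offdiag i j (fun hh => hji hh.symm) with h0 | h1
      · rw [h0] at hn
        have hnot : (ctx.sroot j + ctx.sroot i : Fin ctx.l → ℤ) ∉ ctx.Δ := by
          show (Pi.single j 1 + Pi.single i 1 : Fin ctx.l → ℤ) ∉ ctx.Δ
          rw [ctx.sum_simple_mem_iff j i]
          rintro ⟨-, hm⟩
          rw [hMsymm, h0] at hm
          norm_num at hm
        rw [X_comm (ctx := ctx) (sroot_mem j) (sroot_mem i) hnot n (-1)]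
        exact mul_X_mem_I0 _ (sroot_mem j) (by omega)
      · rw [h1] at hn
        have hmem2 : (ctx.sroot j + ctx.sroot i : Fin ctx.l → ℤ) ∈ ctx.Δ := by
          show (Pi.single j 1 + Pi.single i 1 : Fin ctx.l → ℤ) ∈ ctx.Δ
          rw [ctx.sum_simple_mem_iff j i]
          exact ⟨hji, by rw [hMsymm, h1]⟩
        rw [X_mul (ctx := ctx) (sroot_mem j) (sroot_mem i) hmem2 n (-1)]
        refine Submodule.add_mem _ (mul_X_mem_I0 _ (sroot_mem j) (by omega)) ?_
        exact csmul_mem _ (Uplus_le_I0 (X_mem_Uplus hmem2 (by omega)))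

end ADEContext
end Key

section CompA
namespace ADEContext

variable {ctx : ADEContext}

/-- shifting the modes in the truncated relation -/
lemma shift_sum (j : Fin ctx.l) (t d : ℤ) :
    ∑ m ∈ Finset.Icc (1-t) (-1:ℤ),
        ctx.X (ctx.sroot j) (m - d) * ctx.X (ctx.sroot j) (-t - m - d)
      = ∑ m ∈ Finset.Icc (1-t-d) (-1-d:ℤ),
          ctx.X (ctx.sroot j) m * ctx.X (ctx.sroot j) (-(t + 2*d) - m) := by
  rw [show (1-t-d:ℤ) = (1-t) + (-d) by ring, show (-1-d:ℤ) = (-1) + (-d) by ring, sum_Icc_shift]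
  refine Finset.sum_congr rfl fun m hm => ?_
  rw [show -(t+2*d) - (m + -d) = -t - m - d by ring, show m + -d = m - d by ring]

/-- case `j = i` of the action on the generators of `J` -/
lemma caseA1 (ctx : ADEContext) (i : Fin ctx.l) (t : ℤ) (ht : 2 ≤ t) :
    (∑ m ∈ Finset.Icc (-t) (-2:ℤ),
        ctx.X (ctx.sroot i) m * ctx.X (ctx.sroot i) (-(t + 2) - m))
      * ctx.X (ctx.sroot i) (-1) ∈ ctx.I0 := by
  have hcomm := X_simple_self_comm (ctx := ctx) i
  have hset : Finset.Icc (1 - (t+2)) (-1:ℤ)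
      = insert (-1-t) (insert (-1) (Finset.Icc (-t) (-2))) := by
    ext a; simp only [Finset.mem_Icc, Finset.mem_insert]; omega
  have hsplit : ctx.R i (t+2)
      = ctx.X (ctx.sroot i) (-1-t) * ctx.X (ctx.sroot i) (-(t+2) - (-1-t))
      + (ctx.X (ctx.sroot i) (-1) * ctx.X (ctx.sroot i) (-(t+2) - (-1))
        + ∑ m ∈ Finset.Icc (-t) (-2:ℤ),
            ctx.X (ctx.sroot i) m * ctx.X (ctx.sroot i) (-(t+2) - m)) := by
    show (∑ m ∈ Finset.Icc (1-(t+2)) (-1:ℤ),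
        ctx.X (ctx.sroot i) m * ctx.X (ctx.sroot i) (-(t+2) - m)) = _
    rw [hset, Finset.sum_insert (by simp only [Finset.mem_insert, Finset.mem_Icc]; omega),
        Finset.sum_insert (by simp only [Finset.mem_Icc]; omega)]
  have hsum_eq : (∑ m ∈ Finset.Icc (-t) (-2:ℤ),
        ctx.X (ctx.sroot i) m * ctx.X (ctx.sroot i) (-(t+2) - m))
      = ctx.R i (t+2) - ctx.X (ctx.sroot i) (-1-t) * ctx.X (ctx.sroot i) (-(t+2) - (-1-t))
        - ctx.X (ctx.sroot i) (-1) * ctx.X (ctx.sroot i) (-(t+2) - (-1)) := by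
    rw [hsplit]; abel
  rw [hsum_eq, sub_mul, sub_mul]
  refine Submodule.sub_mem _ (Submodule.sub_mem _ ?_ ?_) ?_
  · have hc : ctx.R i (t+2) * ctx.X (ctx.sroot i) (-1)
        = ctx.X (ctx.sroot i) (-1) * ctx.R i (t+2) := by
      unfold R
      rw [Finset.sum_mul, Finset.mul_sum]
      refine Finset.sum_congr rfl fun m hm => ?_
      rw [mul_assoc, hcomm (-(t+2) - m) (-1), ← mul_assoc, hcomm m (-1), mul_assoc]
    rw [hc]
    exact mul_R_mem_I0 _ (by omega)
  · rw [show -(t+2) - (-1-t) = (-1:ℤ) by ring, mul_assoc, ← R_two i]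
    exact mul_R_mem_I0 _ (by norm_num)
  · rw [show -(t+2) - (-1:ℤ) = -t-1 by ring, hcomm (-1) (-t-1), mul_assoc, ← R_two i]
    exact mul_R_mem_I0 _ (by norm_num)

/-- case `m_{ij} = -1` of the action on the generators of `J` -/
lemma caseA3 (ctx : ADEContext) (i j : Fin ctx.l) (hji : j ≠ i) (hij : ctx.M i j = -1)
    (s : ℤ) (hs : 0 ≤ s) :
    (∑ m ∈ Finset.Icc (-s) (0:ℤ),
        ctx.X (ctx.sroot j) m * ctx.X (ctx.sroot j) (-s - m))
      * ctx.X (ctx.sroot i) (-1) ∈ ctx.I0 := by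
  have hMsymm : ctx.M j i = ctx.M i j := ctx.M_symm.apply i j
  set γ : Fin ctx.l → ℤ := ctx.sroot j + ctx.sroot i with hγdef
  have hγ : γ ∈ ctx.Δ := by
    show (Pi.single j 1 + Pi.single i 1 : Fin ctx.l → ℤ) ∈ ctx.Δ
    rw [ctx.sum_simple_mem_iff j i]
    exact ⟨hji, by rw [hMsymm, hij]⟩
  have hγ' : ctx.sroot i + ctx.sroot j ∈ ctx.Δ := by
    rw [add_comm]; exact hγ
  have hγcomm : ∀ a b : ℤ, ctx.X (ctx.sroot j) a * ctx.X γ b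
      = ctx.X γ b * ctx.X (ctx.sroot j) a := by
    intro a b
    refine X_comm (sroot_mem j) hγ ?_ a b
    have he : ctx.sroot j + γ
        = (2:ℤ) • (Pi.single j 1 : Fin ctx.l → ℤ) + Pi.single i 1 := by
      rw [hγdef, two_smul, ← add_assoc]
      rfl
    rw [he]
    exact ctx.two_simple_add_not_mem j i
  have hjj := X_simple_self_comm (ctx := ctx) j
  set Cji : ℂ := ctx.C (ctx.sroot j) (ctx.sroot i) with hCji
  set Cij : ℂ := ctx.C (ctx.sroot i) (ctx.sroot j) with hCij
  have hCijne : Cij ≠ 0 := ctx.C_ne_zero _ (sroot_mem i) _ (sroot_mem j) hγ'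
  -- the canonical "mixed" sum S'
  set S' : ctx.U := ∑ a ∈ Finset.Icc (-s) (-1:ℤ),
      ctx.X γ a * ctx.X (ctx.sroot j) (-s-1-a) with hS'
  -- R j (s+1) in convenient form
  have hR : ctx.R j (s+1) = ∑ m ∈ Finset.Icc (-s) (-1:ℤ),
      ctx.X (ctx.sroot j) m * ctx.X (ctx.sroot j) (-s-1-m) := by
    unfold R
    rw [show (1:ℤ)-(s+1) = -s by ring]
    exact Finset.sum_congr rfl fun m _ => by rw [show -(s+1)-m = -s-1-m by ring]
  -- commutator identity giving S'
  have hterm2 : ∀ m m' : ℤ, ctx.X (ctx.sroot i) 0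
        * (ctx.X (ctx.sroot j) m * ctx.X (ctx.sroot j) m')
      = (ctx.X (ctx.sroot j) m * ctx.X (ctx.sroot j) m') * ctx.X (ctx.sroot i) 0
        + Cij • (ctx.X γ (0+m') * ctx.X (ctx.sroot j) m)
        + Cij • (ctx.X γ (0+m) * ctx.X (ctx.sroot j) m') := by
    intro m m'
    have h1 := X_mul (ctx := ctx) (sroot_mem i) (sroot_mem j) hγ' 0 m
    have h2 := X_mul (ctx := ctx) (sroot_mem i) (sroot_mem j) hγ' 0 m'
    rw [show ctx.sroot i + ctx.sroot j = γ from add_comm _ _] at h1 h2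
    rw [← mul_assoc, h1, add_mul, smul_mul_assoc, mul_assoc, h2, mul_add,
        mul_smul_comm, hγcomm m (0+m'), ← mul_assoc]
  have hSid : Cij • S' + Cij • S'
      = ctx.X (ctx.sroot i) 0 * ctx.R j (s+1) - ctx.R j (s+1) * ctx.X (ctx.sroot i) 0 := by
    rw [hR, Finset.mul_sum, Finset.sum_mul]
    have : ∀ m ∈ Finset.Icc (-s) (-1:ℤ), ctx.X (ctx.sroot i) 0
          * (ctx.X (ctx.sroot j) m * ctx.X (ctx.sroot j) (-s-1-m))
        = (ctx.X (ctx.sroot j) m * ctx.X (ctx.sroot j) (-s-1-m)) * ctx.X (ctx.sroot i) 0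
          + Cij • (ctx.X γ (0+(-s-1-m)) * ctx.X (ctx.sroot j) m)
          + Cij • (ctx.X γ (0+m) * ctx.X (ctx.sroot j) (-s-1-m)) :=
      fun m _ => hterm2 m (-s-1-m)
    rw [Finset.sum_congr rfl this, Finset.sum_add_distrib, Finset.sum_add_distrib]
    have hrefl : ∑ a ∈ Finset.Icc (-s) (-1:ℤ),
          Cij • (ctx.X γ (0+(-s-1-a)) * ctx.X (ctx.sroot j) a)
        = ∑ a ∈ Finset.Icc (-s) (-1:ℤ),
          Cij • (ctx.X γ (0+a) * ctx.X (ctx.sroot j) (-s-1-a)) := by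
      rw [sum_Icc_reflect (fun a => Cij • (ctx.X γ (0+a) * ctx.X (ctx.sroot j) (-s-1-a)))
        (-s) (-1)]
      refine Finset.sum_congr rfl fun a _ => ?_
      rw [show -s-1-(-s + -1 - a) = a by ring, show (-s + -1 - a : ℤ) = -s-1-a by ring]
    rw [hrefl]
    have hz : ∑ a ∈ Finset.Icc (-s) (-1:ℤ),
          Cij • (ctx.X γ (0+a) * ctx.X (ctx.sroot j) (-s-1-a)) = Cij • S' := by
      rw [hS', Finset.smul_sum]
      refine Finset.sum_congr rfl fun a _ => ?_
      rw [zero_add]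
    rw [hz]
    abel
  have hS'mem : S' ∈ ctx.I0 := by
    have hXR : ctx.X (ctx.sroot i) 0 * ctx.R j (s+1) ∈ ctx.I0 := by
      rcases lt_or_ge s 1 with hs1 | hs1
      · have : s = 0 := by omega
        subst this
        rw [show (0:ℤ)+1 = 1 by ring, R_one, mul_zero]
        exact Submodule.zero_mem _
      · exact mul_R_mem_I0 _ (by omega)
    have hRX : ctx.R j (s+1) * ctx.X (ctx.sroot i) 0 ∈ ctx.I0 := by
      rw [hR, Finset.sum_mul]
      exact Submodule.sum_mem _ fun m _ => mul_X_mem_I0 _ (sroot_mem i) le_rfl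
    have h2 : Cij • S' + Cij • S' ∈ ctx.I0 := by
      rw [hSid]; exact Submodule.sub_mem _ hXR hRX
    have h3 : ((2:ℂ) * Cij) • S' ∈ ctx.I0 := by
      rw [two_mul, add_smul]; exact h2
    have h4 := csmul_mem ((2:ℂ) * Cij)⁻¹ h3
    rwa [smul_smul, inv_mul_cancel₀ (by simp [hCijne]), one_smul] at h4
  -- the two shifted mixed sums
  have hS1 : (∑ a ∈ Finset.Icc (-s) (0:ℤ),
      ctx.X γ (a-1) * ctx.X (ctx.sroot j) (-s-a)) ∈ ctx.I0 := by
    have ebound : Finset.Icc (-s) (0:ℤ) = Finset.Icc ((-s-1)+1) ((-1)+1) := by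
      congr 1 <;> ring
    have e1 : ∑ a ∈ Finset.Icc ((-s-1)+1) ((-1)+(1:ℤ)), ctx.X γ (a-1) * ctx.X (ctx.sroot j) (-s-a)
        = ∑ a ∈ Finset.Icc (-s-1) (-1:ℤ), ctx.X γ a * ctx.X (ctx.sroot j) (-s-1-a) := by
      rw [sum_Icc_shift]
      refine Finset.sum_congr rfl fun a _ => ?_
      rw [show a+1-1 = a by ring, show -s-(a+1) = -s-1-a by ring]
    rw [ebound]
    have hset2 : Finset.Icc (-s-1) (-1:ℤ) = insert (-s-1) (Finset.Icc (-s) (-1)) := by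
      ext a; simp only [Finset.mem_Icc, Finset.mem_insert]; omega
    rw [e1, hset2, Finset.sum_insert (by simp only [Finset.mem_Icc]; omega)]
    refine Submodule.add_mem _ ?_ hS'mem
    rw [show -s-1-(-s-1) = (0:ℤ) by ring]
    exact mul_X_mem_I0 _ (sroot_mem j) le_rfl
  have hS2 : (∑ a ∈ Finset.Icc (-s) (0:ℤ),
      ctx.X γ (-s-a-1) * ctx.X (ctx.sroot j) a) ∈ ctx.I0 := by
    have e2 : ∑ a ∈ Finset.Icc (-s) (0:ℤ), ctx.X γ (-s-a-1) * ctx.X (ctx.sroot j) a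
        = ∑ a ∈ Finset.Icc (-s) (0:ℤ), ctx.X γ (a-1) * ctx.X (ctx.sroot j) (-s-a) := by
      rw [sum_Icc_reflect (fun a => ctx.X γ (a-1) * ctx.X (ctx.sroot j) (-s-a)) (-s) 0]
      refine Finset.sum_congr rfl fun a _ => ?_
      rw [show -s-(-s + 0 - a) = a by ring, show (-s + 0 - a - 1 : ℤ) = -s-a-1 by ring]
    rw [e2]
    exact hS1
  -- the diagonal sum
  have hT : (∑ m ∈ Finset.Icc (-s) (0:ℤ),
      ctx.X (ctx.sroot j) m * ctx.X (ctx.sroot j) (-s - m)) ∈ ctx.I0 := by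
    rcases lt_or_ge s 1 with hs1 | hs1
    · have : s = 0 := by omega
      subst this
      rw [show (-(0:ℤ)) = 0 from neg_zero, Finset.Icc_self, Finset.sum_singleton,
        show (0:ℤ) - 0 = 0 by ring]
      exact Uplus_le_I0 (mul_X_mem_Uplus _ (sroot_mem j) le_rfl)
    · have hset3 : Finset.Icc (-s) (0:ℤ)
          = insert (-s) (insert 0 (Finset.Icc (1-s) (-1))) := by
        ext a; simp only [Finset.mem_Icc, Finset.mem_insert]; omega
      rw [hset3, Finset.sum_insert (by simp only [Finset.mem_insert, Finset.mem_Icc]; omega),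
          Finset.sum_insert (by simp only [Finset.mem_Icc]; omega)]
      refine Submodule.add_mem _ ?_ (Submodule.add_mem _ ?_ ?_)
      · rw [show -s-(-s) = (0:ℤ) by ring]
        exact Uplus_le_I0 (mul_X_mem_Uplus _ (sroot_mem j) le_rfl)
      · rw [show -s-(0:ℤ) = -s by ring, hjj 0 (-s)]
        exact Uplus_le_I0 (mul_X_mem_Uplus _ (sroot_mem j) le_rfl)
      · have : (∑ m ∈ Finset.Icc (1-s) (-1:ℤ),
            ctx.X (ctx.sroot j) m * ctx.X (ctx.sroot j) (-s - m)) = ctx.R j s := rfl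
        rw [this]
        rcases lt_or_ge s 2 with hs2 | hs2
        · have : s = 1 := by omega
          subst this
          rw [R_one]
          exact Submodule.zero_mem _
        · exact J_le_I0 (R_mem_J hs2)
  -- main termwise expansion
  have hterm : ∀ a : ℤ, (ctx.X (ctx.sroot j) a * ctx.X (ctx.sroot j) (-s-a))
        * ctx.X (ctx.sroot i) (-1)
      = ctx.X (ctx.sroot i) (-1) * (ctx.X (ctx.sroot j) a * ctx.X (ctx.sroot j) (-s-a))
        + Cji • (ctx.X γ (a-1) * ctx.X (ctx.sroot j) (-s-a))
        + Cji • (ctx.X γ (-s-a-1) * ctx.X (ctx.sroot j) a) := by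
    intro a
    have h1 := X_mul (ctx := ctx) (sroot_mem j) (sroot_mem i) hγ a (-1)
    have h2 := X_mul (ctx := ctx) (sroot_mem j) (sroot_mem i) hγ (-s-a) (-1)
    rw [mul_assoc, h2, mul_add, mul_smul_comm, hγcomm a (-s-a + -1), ← mul_assoc, h1,
        add_mul, smul_mul_assoc, mul_assoc,
        show a + -1 = a - 1 by ring, show -s-a + -1 = -s-a-1 by ring]
  rw [Finset.sum_mul]
  have := Finset.sum_congr rfl (fun a (_ : a ∈ Finset.Icc (-s) (0:ℤ)) => hterm a)
  rw [this, Finset.sum_add_distrib, Finset.sum_add_distrib, ← Finset.mul_sum,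
    ← Finset.smul_sum, ← Finset.smul_sum]
  exact Submodule.add_mem _
    (Submodule.add_mem _ (mul_mem_of_mem _ hT) (csmul_mem _ hS1)) (csmul_mem _ hS2)

end ADEContext
end CompA

/-- (Lemma 3.2)  For every `i = 1, …, l` and every character `ν : Q → ℂ^×` (determined by its
values `νu j = ν(α_j)`), the map `σ_{ω_i,ν} : a ↦ τ_{ω_i,ν}(a) x_{α_i}(-1)` maps `I_{λ_i}`
into `I_{λ_0}`.  Here `τ` is the extension to `U(𝔫̄)` of `τ_{ω_i,ν}`, i.e. the algebra
automorphism acting on generators by `x_α(m) ↦ ν(α) x_α(m - ⟨ω_i, α⟩)`, where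
`ω_i = α_i - λ_i`, so that `⟨ω_i, α⟩ = (∑_j m_{ij} α^j) - α^i` for `α` with simple-root
coordinates `α^j`. -/
theorem sigma_omega_maps_Ii_into_I0 (ctx : ADEContext) (i : Fin ctx.l)
    (νu : Fin ctx.l → ℂˣ) (τ : ctx.U ≃ₐ[ℂ] ctx.U)
    (hτ : ∀ α ∈ ctx.Δ, ∀ m : ℤ,
      τ (ctx.X α m) = ctx.charVal νu α • ctx.X α (m - ((∑ j, ctx.M i j * α j) - α i))) :
    ∀ u ∈ ctx.Ii i, τ u * ctx.X (ctx.sroot i) (-1) ∈ ctx.I0 := by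
  open ADEContext in
  intro u hu
  rcases Submodule.mem_sup.mp
    (show u ∈ ctx.I0 ⊔ Submodule.span ctx.U {ctx.X (ctx.sroot i) (-1)} from hu)
    with ⟨v, hv, w, hw, rfl⟩
  rcases Submodule.mem_sup.mp (show v ∈ ctx.Jideal ⊔ ctx.Uplus from hv)
    with ⟨a, ha, b, hb, rfl⟩
  rw [map_add, map_add, add_mul, add_mul]
  refine Submodule.add_mem _ (Submodule.add_mem _ ?_ ?_) ?_
  · -- a ∈ Jideal
    refine Submodule.span_induction ?_ ?_ ?_ ?_ ha
    · rintro x ⟨j, t, ht, rfl⟩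
      set d : ℤ := ctx.M i j - (if j = i then 1 else 0) with hd
      have hDval : (∑ k, ctx.M i k * (ctx.sroot j) k) - (ctx.sroot j) i = d :=
        (Dw_single (ctx := ctx) i j).trans hd.symm
      have hDj : ∀ m : ℤ,
          m - ((∑ k, ctx.M i k * (ctx.sroot j) k) - (ctx.sroot j) i) = m - d := by
        intro m; rw [hDval]
      have hτR : τ (ctx.R j t) * ctx.X (ctx.sroot i) (-1)
          = (ctx.charVal νu (ctx.sroot j) * ctx.charVal νu (ctx.sroot j)) •
            ((∑ m ∈ Finset.Icc (1-t) (-1:ℤ),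
              ctx.X (ctx.sroot j) (m - d) * ctx.X (ctx.sroot j) (-t - m - d))
              * ctx.X (ctx.sroot i) (-1)) := by
        rw [← smul_mul_assoc]
        congr 1
        show τ (∑ m ∈ Finset.Icc (1-t) (-1:ℤ),
          ctx.X (ctx.sroot j) m * ctx.X (ctx.sroot j) (-t-m)) = _
        rw [map_sum, Finset.smul_sum]
        refine Finset.sum_congr rfl fun m hm => ?_
        rw [map_mul, hτ _ (sroot_mem j) m, hτ _ (sroot_mem j) (-t-m), hDj m, hDj (-t-m),
          smul_mul_assoc, mul_smul_comm, smul_smul]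
      rw [hτR]
      apply csmul_mem
      rw [shift_sum]
      by_cases hji : j = i
      · subst hji
        have hd2 : d = 1 := by rw [hd, if_pos rfl, ctx.M_diag j]; norm_num
        rw [hd2, show (1:ℤ)-t-1 = -t by ring, show (-1:ℤ)-1 = -2 by ring,
          show (t+2*1:ℤ) = t+2 by ring]
        exact caseA1 ctx j t ht
      · rcases ctx.M_offdiag i j (fun hh => hji hh.symm) with h0 | h1
        · have hd2 : d = 0 := by rw [hd, if_neg hji, h0]; norm_num
          rw [hd2, show (1:ℤ)-t-0 = 1-t by ring, show (-1:ℤ)-0 = -1 by ring,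
            show (t+2*0:ℤ) = t by ring]
          have hR : (∑ m ∈ Finset.Icc (1-t) (-1:ℤ),
              ctx.X (ctx.sroot j) m * ctx.X (ctx.sroot j) (-t - m)) = ctx.R j t := rfl
          rw [hR]
          have hnot : ctx.sroot j + ctx.sroot i ∉ ctx.Δ := by
            show (Pi.single j 1 + Pi.single i 1 : Fin ctx.l → ℤ) ∉ ctx.Δ
            rw [ctx.sum_simple_mem_iff j i]
            rintro ⟨-, hm⟩
            rw [ctx.M_symm.apply i j, h0] at hm
            norm_num at hm
          have hc : ∀ a b : ℤ, ctx.X (ctx.sroot j) a * ctx.X (ctx.sroot i) b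
              = ctx.X (ctx.sroot i) b * ctx.X (ctx.sroot j) a :=
            fun a b => X_comm (sroot_mem j) (sroot_mem i) hnot a b
          have hcR : ctx.R j t * ctx.X (ctx.sroot i) (-1)
              = ctx.X (ctx.sroot i) (-1) * ctx.R j t := by
            unfold ADEContext.R
            rw [Finset.sum_mul, Finset.mul_sum]
            refine Finset.sum_congr rfl fun m hm => ?_
            rw [mul_assoc, hc (-t-m) (-1), ← mul_assoc, hc m (-1), mul_assoc]
          rw [hcR]
          exact mul_R_mem_I0 _ ht
        · have hd2 : d = -1 := by rw [hd, if_neg hji, h1]; norm_num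
          rw [hd2, show (1:ℤ)-t-(-1) = -(t-2) by ring, show (-1:ℤ)-(-1) = 0 by ring,
            show (t+2*(-1):ℤ) = t-2 by ring]
          exact caseA3 ctx i j hji h1 (t-2) (by omega)
    · simp
    · intro x y hx hy hx' hy'
      rw [map_add, add_mul]
      exact Submodule.add_mem _ hx' hy'
    · intro r x hx hx'
      rw [smul_eq_mul, map_mul, mul_assoc]
      exact mul_mem_of_mem _ hx'
  · -- b ∈ Uplus
    refine Submodule.span_induction ?_ ?_ ?_ ?_ hb
    · rintro x ⟨α, hα, m, hm, rfl⟩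
      rw [hτ α hα m, smul_mul_assoc]
      apply csmul_mem
      refine key ctx i (∑ k, α k).toNat α hα rfl _ ?_
      show (0:ℤ) ≤ m - Dw ctx i α + Dw ctx i α
      rw [sub_add_cancel]
      exact hm
    · simp
    · intro x y hx hy hx' hy'
      rw [map_add, add_mul]
      exact Submodule.add_mem _ hx' hy'
    · intro r x hx hx'
      rw [smul_eq_mul, map_mul, mul_assoc]
      exact mul_mem_of_mem _ hx'
  · -- w ∈ span {x_i(-1)}
    rcases Submodule.mem_span_singleton.mp hw with ⟨r, rfl⟩
    rw [smul_eq_mul, map_mul, mul_assoc]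
    apply mul_mem_of_mem
    rw [hτ _ (sroot_mem i) (-1)]
    have hDi : (-1:ℤ) - ((∑ k, ctx.M i k * (ctx.sroot i) k) - (ctx.sroot i) i) = -2 := by
      have h1 : (∑ k, ctx.M i k * (ctx.sroot i) k) - (ctx.sroot i) i = 1 := by
        have h2 := Dw_single (ctx := ctx) i i
        rw [if_pos rfl, ctx.M_diag i] at h2
        exact h2.trans (by norm_num)
      rw [h1]; norm_num
    rw [hDi, smul_mul_assoc]
    apply csmul_mem
    have hcomm := X_simple_self_comm (ctx := ctx) i
    have hR3 : ctx.R i 3 = ctx.X (ctx.sroot i) (-2) * ctx.X (ctx.sroot i) (-1)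
        + ctx.X (ctx.sroot i) (-1) * ctx.X (ctx.sroot i) (-2) := by
      unfold ADEContext.R
      rw [show (1:ℤ)-3 = -2 by norm_num,
        show Finset.Icc (-2:ℤ) (-1) = insert (-2:ℤ) {(-1:ℤ)} from by
          ext a; simp only [Finset.mem_Icc, Finset.mem_insert, Finset.mem_singleton]; omega,
        Finset.sum_insert (by norm_num), Finset.sum_singleton,
        show (-3:ℤ) - (-2) = -1 by norm_num, show (-3:ℤ) - (-1) = -2 by norm_num]
    have h2A : ctx.R i 3 = (2:ℂ) • (ctx.X (ctx.sroot i) (-2) * ctx.X (ctx.sroot i) (-1)) := by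
      rw [hR3, hcomm (-1) (-2), two_smul]
    have h3 := csmul_mem (ctx := ctx) ((2:ℂ)⁻¹)
      (J_le_I0 (R_mem_J (ctx := ctx) (j := i) (show (2:ℤ) ≤ 3 by norm_num)))
    rw [h2A, smul_smul] at h3
    norm_num at h3
    exact h3
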